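/- Let X_1, …, X_n be independent random variables taking values in [0,1], let X = Σ_{i=1}^n X_i and μ = E[X] > 0. For any δ > 0, setting k = ⌈μδ⌉ and q = μ(1+δ), one has Pr(X ≥ q) ≤ E[S_k(X_1, …, X_n)] / C(q, k) ≤ G(μ, δ). -/

import Mathlib

open MeasureTheory ProbabilityTheory

/-- The elementary symmetric polynomial `S_k(x_1, …, x_n)`. In particular `S_0 = 1`. -/
noncomputable def symS (n k : ℕ) (x : Fin n → ℝ) : ℝ :=
  ∑ T ∈ Finset.univ.powersetCard k, ∏ i ∈ T, x i

/-- The generalized binomial coefficient `C(x, r) = x(x−1)⋯(x−r+1)/r!` for real `x`. -/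
noncomputable def genChoose (x : ℝ) (r : ℕ) : ℝ :=
  (∏ i ∈ Finset.range r, (x - i)) / (Nat.factorial r : ℝ)

/-- The Chernoff–Hoeffding bound function `G(μ, δ) = (e^δ / (1+δ)^(1+δ))^μ`. -/
noncomputable def chernoffG (μ δ : ℝ) : ℝ :=
  (Real.exp δ / (1 + δ) ^ (1 + δ)) ^ μ

open Finset
lemma symS_zero (n : ℕ) (x : Fin n → ℝ) : symS n 0 x = 1 := by
  simp [symS]

lemma symS_nonneg (n k : ℕ) (x : Fin n → ℝ) (hx : ∀ i, 0 ≤ x i) : 0 ≤ symS n k x := by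
  apply Finset.sum_nonneg
  intro T _
  exact Finset.prod_nonneg fun i _ => hx i

lemma symS_rec (n k : ℕ) (x : Fin n → ℝ) :
    ((k : ℝ) + 1) * symS n (k+1) x
      = ∑ T ∈ (Finset.univ : Finset (Fin n)).powersetCard k,
          (((∑ i, x i) - ∑ i ∈ T, x i) * ∏ i ∈ T, x i) := by
  have key : ∑ p ∈ ((Finset.univ : Finset (Fin n)).powersetCard (k+1)).sigma (fun U => U),
        (x p.2 * ∏ i ∈ p.1.erase p.2, x i)
      = ∑ p ∈ ((Finset.univ : Finset (Fin n)).powersetCard k).sigma (fun T => Tᶜ),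
        (x p.2 * ∏ i ∈ p.1, x i) := by
    apply Finset.sum_nbij' (fun p => ⟨p.1.erase p.2, p.2⟩) (fun p => ⟨insert p.2 p.1, p.2⟩)
    · rintro ⟨U, j⟩ hp
      rw [Finset.mem_sigma] at hp
      obtain ⟨hU, hj⟩ := hp
      rw [Finset.mem_powersetCard] at hU
      rw [Finset.mem_sigma, Finset.mem_powersetCard]
      refine ⟨⟨(Finset.erase_subset _ _).trans hU.1, ?_⟩, ?_⟩
      · rw [Finset.card_erase_of_mem hj, hU.2]; rfl
      · simp [Finset.mem_compl]
    · rintro ⟨T, j⟩ hp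
      rw [Finset.mem_sigma, Finset.mem_compl] at hp
      obtain ⟨hT, hj⟩ := hp
      rw [Finset.mem_powersetCard] at hT
      rw [Finset.mem_sigma, Finset.mem_powersetCard]
      refine ⟨⟨Finset.subset_univ _, ?_⟩, Finset.mem_insert_self _ _⟩
      rw [Finset.card_insert_of_notMem hj, hT.2]
    · rintro ⟨U, j⟩ hp
      rw [Finset.mem_sigma] at hp
      simp [Finset.insert_erase hp.2]
    · rintro ⟨T, j⟩ hp
      rw [Finset.mem_sigma, Finset.mem_compl] at hp
      simp [Finset.erase_insert hp.2]
    · rintro ⟨U, j⟩ hp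
      rfl
  rw [Finset.sum_sigma, Finset.sum_sigma] at key
  have lhs : ∀ U ∈ (Finset.univ : Finset (Fin n)).powersetCard (k+1),
      ∑ j ∈ U, (x j * ∏ i ∈ U.erase j, x i) = ((k : ℝ)+1) * ∏ i ∈ U, x i := by
    intro U hU
    rw [Finset.mem_powersetCard] at hU
    rw [Finset.sum_congr rfl (fun j hj => Finset.mul_prod_erase U x hj),
      Finset.sum_const, hU.2, nsmul_eq_mul]
    push_cast
    ring
  rw [Finset.sum_congr rfl lhs] at key
  rw [← Finset.mul_sum] at key
  rw [symS, key]
  apply Finset.sum_congr rfl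
  intro T hT
  simp only []
  rw [← Finset.sum_mul]
  congr 1
  have := Finset.sum_compl_add_sum T x
  linarith

lemma symS_lower (n : ℕ) (x : Fin n → ℝ) (hx : ∀ i, x i ∈ Set.Icc (0:ℝ) 1) :
    ∀ k : ℕ, ((k : ℝ) - 1 ≤ ∑ i, x i) →
      ∏ i ∈ Finset.range k, ((∑ i, x i) - i) ≤ (Nat.factorial k : ℝ) * symS n k x := by
  intro k
  induction k with
  | zero => intro _; simp [symS_zero]
  | succ k ih =>
    intro hk
    have hk' : (k : ℝ) ≤ ∑ i, x i := by push_cast at hk; linarith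
    have step1 : ∏ i ∈ Finset.range (k+1), ((∑ i, x i) - i)
        ≤ ((Nat.factorial k : ℝ) * symS n k x) * ((∑ i, x i) - k) := by
      rw [Finset.prod_range_succ]
      apply mul_le_mul_of_nonneg_right (ih (by linarith)) (by linarith)
    refine step1.trans ?_
    have step2 : symS n k x * ((∑ i, x i) - k)
        ≤ ((k : ℝ) + 1) * symS n (k+1) x := by
      rw [symS_rec, symS, Finset.sum_mul]
      apply Finset.sum_le_sum
      intro T hT
      rw [Finset.mem_powersetCard] at hT
      have h1 : ∑ i ∈ T, x i ≤ (k : ℝ) := by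
        calc ∑ i ∈ T, x i ≤ ∑ _i ∈ T, (1:ℝ) :=
          Finset.sum_le_sum fun i _ => (hx i).2
        _ = (k : ℝ) := by rw [Finset.sum_const, hT.2]; simp
      have h2 : (0:ℝ) ≤ ∏ i ∈ T, x i := Finset.prod_nonneg fun i _ => (hx i).1
      rw [mul_comm]
      exact mul_le_mul_of_nonneg_right (by linarith) h2
    calc ((Nat.factorial k : ℝ) * symS n k x) * ((∑ i, x i) - k)
        = (Nat.factorial k : ℝ) * (symS n k x * ((∑ i, x i) - k)) := by ring
      _ ≤ (Nat.factorial k : ℝ) * (((k : ℝ) + 1) * symS n (k+1) x) := by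
          apply mul_le_mul_of_nonneg_left step2 (by positivity)
      _ = (Nat.factorial (k+1) : ℝ) * symS n (k+1) x := by
          rw [Nat.factorial_succ]; push_cast; ring

lemma symS_upper (n : ℕ) (x : Fin n → ℝ) (hx : ∀ i, 0 ≤ x i) :
    ∀ k : ℕ, (Nat.factorial k : ℝ) * symS n k x ≤ (∑ i, x i) ^ k := by
  intro k
  have hs : (0:ℝ) ≤ ∑ i, x i := Finset.sum_nonneg fun i _ => hx i
  induction k with
  | zero => simp [symS_zero]
  | succ k ih =>
    have step2 : ((k : ℝ) + 1) * symS n (k+1) x ≤ (∑ i, x i) * symS n k x := by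
      rw [symS_rec, symS, Finset.mul_sum]
      apply Finset.sum_le_sum
      intro T hT
      have h1 : (0:ℝ) ≤ ∑ i ∈ T, x i := Finset.sum_nonneg fun i _ => hx i
      have h2 : (0:ℝ) ≤ ∏ i ∈ T, x i := Finset.prod_nonneg fun i _ => hx i
      exact mul_le_mul_of_nonneg_right (by linarith) h2
    calc (Nat.factorial (k+1) : ℝ) * symS n (k+1) x
        = (Nat.factorial k : ℝ) * (((k:ℝ)+1) * symS n (k+1) x) := by
          rw [Nat.factorial_succ]; push_cast; ring
      _ ≤ (Nat.factorial k : ℝ) * ((∑ i, x i) * symS n k x) := by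
          apply mul_le_mul_of_nonneg_left step2 (by positivity)
      _ = (∑ i, x i) * ((Nat.factorial k : ℝ) * symS n k x) := by ring
      _ ≤ (∑ i, x i) * (∑ i, x i)^k := mul_le_mul_of_nonneg_left ih hs
      _ = (∑ i, x i)^(k+1) := by ring

lemma integral_finset_prod_of_indep {Ω : Type*} [MeasureSpace Ω]
    [IsProbabilityMeasure (ℙ : Measure Ω)] {n : ℕ} {X : Fin n → Ω → ℝ}
    (hXmeas : ∀ i, Measurable (X i))
    (hindep : iIndepFun X ℙ) (T : Finset (Fin n)) :
    ∫ ω, ∏ i ∈ T, X i ω ∂ℙ = ∏ i ∈ T, ∫ ω, X i ω ∂ℙ := by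
  induction T using Finset.induction_on with
  | empty => simp
  | @insert a s ha ih =>
    have hprod : Measurable (fun ω => ∏ i ∈ s, X i ω) :=
      Finset.measurable_prod s fun i _ => hXmeas i
    have hInd : IndepFun (∏ j ∈ s, X j) (X a) ℙ :=
      hindep.indepFun_finsetProd_of_notMem hXmeas ha
    have hfun : (∏ j ∈ s, X j) = fun ω => ∏ i ∈ s, X i ω := by
      ext ω; simp [Finset.prod_apply]
    have hprod' : AEStronglyMeasurable (∏ j ∈ s, X j) ℙ := by
      rw [hfun]; exact hprod.aestronglyMeasurable
    have := hInd.integral_mul_eq_mul_integral hprod' (hXmeas a).aestronglyMeasurable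
    rw [hfun] at this
    simp only [Finset.prod_apply] at this
    simp only [Finset.prod_insert ha]
    calc ∫ ω, X a ω * ∏ i ∈ s, X i ω ∂ℙ
        = ∫ ω, (∏ i ∈ s, X i ω) * X a ω ∂ℙ := by
          congr 1; ext ω; ring
      _ = (∫ ω, ∏ i ∈ s, X i ω ∂ℙ) * ∫ ω, X a ω ∂ℙ := this
      _ = (∫ ω, X a ω ∂ℙ) * ∏ i ∈ s, ∫ ω, X i ω ∂ℙ := by rw [ih]; ring

lemma sum_log_bound (μ δ : ℝ) (hμ : 0 < μ) (hδ : 0 < δ) (k : ℕ) (hk1 : 1 ≤ k)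
    (hk2 : (k:ℝ) - 1 < μ*δ) (hk3 : μ*δ ≤ k) :
    μ * ((1+δ) * Real.log (1+δ) - δ) ≤ ∑ i ∈ Finset.range k, Real.log (1 + δ - i/μ) := by
  set g : ℝ → ℝ := fun u => Real.log (1 + δ - u/μ) with hg
  obtain ⟨m, rfl⟩ : ∃ m, k = m + 1 := ⟨k - 1, (Nat.succ_pred_eq_of_pos hk1).symm⟩
  have hmlt : (m : ℝ) < μ * δ := by push_cast at hk2; linarith
  have hm0 : (0:ℝ) ≤ (m:ℝ) := Nat.cast_nonneg m
  have hmle : μ * δ ≤ (m:ℝ) + 1 := by push_cast at hk3; linarith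
  -- positivity of argument on [0, μδ]
  have harg : ∀ u ∈ Set.Icc (0:ℝ) (μ*δ), (1:ℝ) ≤ 1 + δ - u/μ := by
    intro u hu
    have : u / μ ≤ δ := by
      rw [div_le_iff₀ hμ]; linarith [hu.2]
    linarith
  have hanti : AntitoneOn g (Set.Icc (0:ℝ) (μ*δ)) := by
    intro u hu v hv huv
    apply Real.log_le_log (by linarith [harg v hv])
    have : u / μ ≤ v / μ := (div_le_div_iff_of_pos_right hμ).mpr huv
    linarith
  have hcont : ContinuousOn g (Set.Icc (0:ℝ) (μ*δ)) := by
    apply ContinuousOn.log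
    · exact (continuousOn_const.sub (continuousOn_id.div_const μ))
    · intro u hu; have := harg u hu; linarith
  have hsub1 : Set.Icc (0:ℝ) (m:ℝ) ⊆ Set.Icc (0:ℝ) (μ*δ) :=
    Set.Icc_subset_Icc le_rfl hmlt.le
  have hsub2 : Set.Icc ((m:ℝ)) (μ*δ) ⊆ Set.Icc (0:ℝ) (μ*δ) :=
    Set.Icc_subset_Icc hm0 le_rfl
  have hi1 : IntervalIntegrable g MeasureTheory.volume 0 (m:ℝ) := by
    apply ContinuousOn.intervalIntegrable
    rw [Set.uIcc_of_le hm0]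
    exact hcont.mono hsub1
  have hi2 : IntervalIntegrable g MeasureTheory.volume (m:ℝ) (μ*δ) := by
    apply ContinuousOn.intervalIntegrable
    rw [Set.uIcc_of_le hmlt.le]
    exact hcont.mono hsub2
  -- integral value
  have hval : ∫ u in (0:ℝ)..(μ*δ), g u = μ * ((1+δ)*Real.log (1+δ) - δ) := by
    have h1 := intervalIntegral.integral_comp_div (a := (0:ℝ)) (b := μ*δ)
      (fun t => Real.log (1+δ - t)) hμ.ne'
    have h2 := intervalIntegral.integral_comp_sub_left (a := (0:ℝ)) (b := δ)
      Real.log (1+δ)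
    have h3 : ∫ x in (1:ℝ)..(1+δ), Real.log x
        = (1+δ) * Real.log (1+δ) - 1 * Real.log 1 - (1+δ) + 1 := by
      apply integral_log
    have e1 : μ * δ / μ = δ := by rw [mul_comm]; exact mul_div_cancel_right₀ δ hμ.ne'
    have e2 : (0:ℝ) / μ = 0 := zero_div μ
    rw [e1, e2] at h1
    have e3 : (1+δ)-δ = (1:ℝ) := by ring
    have e4 : (1+δ)-(0:ℝ) = 1+δ := by ring
    rw [e3, e4] at h2
    simp only [hg]
    rw [h1, h2, h3, smul_eq_mul]
    simp only [Real.log_one]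
    ring
  -- sum comparison
  have hsplit : ∫ u in (0:ℝ)..(μ*δ), g u
      = (∫ u in (0:ℝ)..(m:ℝ), g u) + ∫ u in (m:ℝ)..(μ*δ), g u :=
    (intervalIntegral.integral_add_adjacent_intervals hi1 hi2).symm
  have hb1 : ∫ u in (0:ℝ)..(m:ℝ), g u ≤ ∑ i ∈ Finset.range m, g i := by
    have h := AntitoneOn.integral_le_sum (x₀ := (0:ℝ)) (a := m) (f := g) ?_
    · simpa using h
    · rw [zero_add]; exact hanti.mono hsub1
  have hgm0 : 0 ≤ g (m:ℝ) := by
    have := harg (m:ℝ) ⟨hm0, hmlt.le⟩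
    exact Real.log_nonneg this
  have hb2 : ∫ u in (m:ℝ)..(μ*δ), g u ≤ g (m:ℝ) := by
    have hc : ∫ _u in (m:ℝ)..(μ*δ), g (m:ℝ) = (μ*δ - m) * g (m:ℝ) := by
      rw [intervalIntegral.integral_const, smul_eq_mul]
    have hmono : ∫ u in (m:ℝ)..(μ*δ), g u ≤ ∫ _u in (m:ℝ)..(μ*δ), g (m:ℝ) := by
      apply intervalIntegral.integral_mono_on hmlt.le hi2 intervalIntegrable_const
      intro u hu
      exact hanti ⟨hm0, hmlt.le⟩ (hsub2 hu) hu.1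
    calc ∫ u in (m:ℝ)..(μ*δ), g u ≤ (μ*δ - m) * g (m:ℝ) := hc ▸ hmono
      _ ≤ 1 * g (m:ℝ) := mul_le_mul_of_nonneg_right (by linarith) hgm0
      _ = g (m:ℝ) := one_mul _
  have hsum : ∑ i ∈ Finset.range (m+1), Real.log (1 + δ - i/μ)
      = (∑ i ∈ Finset.range m, g i) + g (m:ℝ) := by
    rw [Finset.sum_range_succ]
  rw [hsum, ← hval, hsplit]
  exact add_le_add hb1 hb2

lemma chernoffG_eq (μ δ : ℝ) (hδ : 0 < δ) :
    chernoffG μ δ = Real.exp ((δ - (1+δ) * Real.log (1+δ)) * μ) := by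
  have h1 : (0:ℝ) < 1 + δ := by linarith
  have hbase : Real.exp δ / (1+δ) ^ (1+δ)
      = Real.exp (δ - Real.log (1+δ) * (1+δ)) := by
    rw [Real.rpow_def_of_pos h1, Real.exp_sub]
  rw [chernoffG, hbase, ← Real.exp_mul]
  ring_nf

lemma ratio_le_G (μ δ : ℝ) (hμ : 0 < μ) (hδ : 0 < δ) (k : ℕ) (hk : k = ⌈μ*δ⌉₊) :
    μ^k / ∏ i ∈ Finset.range k, (μ*(1+δ) - i) ≤ chernoffG μ δ := by
  have hμδ : 0 < μ * δ := mul_pos hμ hδ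
  have hk1 : 1 ≤ k := by rw [hk]; exact Nat.ceil_pos.mpr hμδ
  have hk3 : μ*δ ≤ k := by rw [hk]; exact Nat.le_ceil _
  have hk2 : (k:ℝ) - 1 < μ*δ := by
    have := Nat.ceil_lt_add_one hμδ.le
    rw [hk]; linarith [hk ▸ this]
  have hterm : ∀ i ∈ Finset.range k, (0:ℝ) < 1 + δ - i/μ := by
    intro i hi
    rw [Finset.mem_range] at hi
    have : (i:ℝ) < μ * δ := by
      have : (i:ℝ) ≤ (k:ℝ) - 1 := by
        have : (i:ℝ) + 1 ≤ (k:ℝ) := by exact_mod_cast Nat.succ_le_of_lt hi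
        linarith
      linarith
    have : i / μ < δ := by rwa [div_lt_iff₀ hμ, mul_comm δ μ]
    linarith
  have hfac : ∀ i ∈ Finset.range k, μ*(1+δ) - i = μ * (1 + δ - i/μ) := by
    intro i _
    field_simp
  have hprodeq : ∏ i ∈ Finset.range k, (μ*(1+δ) - i)
      = μ^k * ∏ i ∈ Finset.range k, (1 + δ - i/μ) := by
    rw [Finset.prod_congr rfl hfac, Finset.prod_mul_distrib, Finset.prod_const,
      Finset.card_range]
  set P := ∏ i ∈ Finset.range k, (1 + δ - i/μ) with hP
  have hPpos : 0 < P := Finset.prod_pos hterm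
  have hlogP : Real.log P = ∑ i ∈ Finset.range k, Real.log (1 + δ - i/μ) :=
    Real.log_prod (fun i hi => (hterm i hi).ne')
  have hPlb : Real.exp (μ * ((1+δ) * Real.log (1+δ) - δ)) ≤ P := by
    rw [← Real.exp_log hPpos]
    apply Real.exp_le_exp.mpr
    rw [hlogP]
    exact sum_log_bound μ δ hμ hδ k hk1 hk2 hk3
  rw [hprodeq, chernoffG_eq μ δ hδ]
  have hμk : (0:ℝ) < μ^k := by positivity
  rw [div_le_iff₀ (by positivity)]
  have key : Real.exp ((δ - (1+δ) * Real.log (1+δ)) * μ) * (μ^k * P)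
      ≥ Real.exp ((δ - (1+δ) * Real.log (1+δ)) * μ)
        * (μ^k * Real.exp (μ * ((1+δ) * Real.log (1+δ) - δ))) := by
    apply mul_le_mul_of_nonneg_left _ (Real.exp_nonneg _)
    exact mul_le_mul_of_nonneg_left hPlb hμk.le
  refine le_trans ?_ key
  rw [show Real.exp ((δ - (1+δ) * Real.log (1+δ)) * μ)
      * (μ^k * Real.exp (μ * ((1+δ) * Real.log (1+δ) - δ)))
    = μ^k * (Real.exp ((δ - (1+δ) * Real.log (1+δ)) * μ)
      * Real.exp (μ * ((1+δ) * Real.log (1+δ) - δ))) from by ring,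
    ← Real.exp_add]
  rw [show (δ - (1+δ) * Real.log (1+δ)) * μ + μ * ((1+δ) * Real.log (1+δ) - δ) = 0 from by ring,
    Real.exp_zero, mul_one]


/-- For independent random variables `X_1, …, X_n ∈ [0,1]` with
`X = Σ X_i`, `μ = E[X] > 0`, and any `δ > 0`, setting `k = ⌈μδ⌉` and `q = μ(1+δ)`, one has
`Pr(X ≥ q) ≤ E[S_k(X_1, …, X_n)] / C(q, k) ≤ G(μ, δ)`. -/
theorem symmetric_poly_chernoff
    {Ω : Type*} [MeasureSpace Ω] [IsProbabilityMeasure (ℙ : Measure Ω)]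
    (n : ℕ) (X : Fin n → Ω → ℝ)
    (hXmeas : ∀ i, Measurable (X i))
    (hXrange : ∀ i ω, X i ω ∈ Set.Icc (0 : ℝ) 1)
    (hindep : iIndepFun X ℙ)
    (μ : ℝ) (hμ : μ = ∫ ω, (∑ i, X i ω) ∂ℙ) (hμpos : 0 < μ)
    (δ : ℝ) (hδ : 0 < δ) (k : ℕ) (hk : k = ⌈μ * δ⌉₊) (q : ℝ) (hq : q = μ * (1 + δ)) :
    (ℙ {ω | q ≤ ∑ i, X i ω}).toReal ≤
        (∫ ω, symS n k (fun i => X i ω) ∂ℙ) / genChoose q k ∧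
      (∫ ω, symS n k (fun i => X i ω) ∂ℙ) / genChoose q k ≤ chernoffG μ δ := by
  have hμδ : 0 < μ * δ := mul_pos hμpos hδ
  have hqμδ : μ * δ < q := by rw [hq]; nlinarith
  have hk2 : (k:ℝ) - 1 < μ * δ := by
    have h := Nat.ceil_lt_add_one hμδ.le
    rw [hk]; push_cast; linarith
  have hik : ∀ i ∈ Finset.range k, (i:ℝ) < q := by
    intro i hi
    rw [Finset.mem_range] at hi
    have : (i:ℝ) + 1 ≤ (k:ℝ) := by exact_mod_cast Nat.succ_le_of_lt hi
    linarith
  have hCpos : 0 < genChoose q k := by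
    apply div_pos
    · exact Finset.prod_pos fun i hi => by linarith [hik i hi]
    · exact_mod_cast Nat.factorial_pos k
  -- integrability facts
  have hprodmeas : ∀ T : Finset (Fin n), Measurable (fun ω => ∏ i ∈ T, X i ω) :=
    fun T => Finset.measurable_prod T fun i _ => hXmeas i
  have hprodint : ∀ T : Finset (Fin n), Integrable (fun ω => ∏ i ∈ T, X i ω) ℙ := by
    intro T
    apply Integrable.mono' (integrable_const (1:ℝ)) (hprodmeas T).aestronglyMeasurable
    apply ae_of_all
    intro ω
    rw [Real.norm_eq_abs, abs_of_nonneg (Finset.prod_nonneg fun i _ => (hXrange i ω).1)]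
    exact Finset.prod_le_one (fun i _ => (hXrange i ω).1) (fun i _ => (hXrange i ω).2)
  have hXint : ∀ i, Integrable (X i) ℙ := by
    intro i
    have := hprodint {i}
    simpa using this
  have hsymint : Integrable (fun ω => symS n k (fun i => X i ω)) ℙ := by
    simp only [symS]
    exact integrable_finset_sum _ fun T _ => hprodint T
  have hsymnonneg : ∀ ω, 0 ≤ symS n k (fun i => X i ω) :=
    fun ω => symS_nonneg n k _ fun i => (hXrange i ω).1
  -- Markov part
  have hsummeas : Measurable (fun ω => ∑ i, X i ω) :=
    Finset.measurable_sum _ fun i _ => hXmeas i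
  have hEmeas : MeasurableSet {ω | q ≤ ∑ i, X i ω} :=
    measurableSet_le measurable_const hsummeas
  have hpoint : ∀ ω, ({ω | q ≤ ∑ i, X i ω}).indicator (fun _ => genChoose q k) ω
      ≤ symS n k (fun i => X i ω) := by
    intro ω
    by_cases hω : ω ∈ {ω | q ≤ ∑ i, X i ω}
    · rw [Set.indicator_of_mem hω]
      have hs : q ≤ ∑ i, X i ω := hω
      have h1 : ∏ i ∈ Finset.range k, (q - i) ≤ ∏ i ∈ Finset.range k, ((∑ i, X i ω) - i) := by
        apply Finset.prod_le_prod
        · intro i hi; linarith [hik i hi]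
        · intro i hi; linarith
      have h2 : ∏ i ∈ Finset.range k, ((∑ i, X i ω) - i)
          ≤ (Nat.factorial k : ℝ) * symS n k (fun i => X i ω) := by
        apply symS_lower n _ (fun i => hXrange i ω) k
        linarith
      rw [genChoose, div_le_iff₀ (by exact_mod_cast Nat.factorial_pos k)]
      calc ∏ i ∈ Finset.range k, (q - i)
          ≤ (Nat.factorial k : ℝ) * symS n k (fun i => X i ω) := h1.trans h2
        _ = symS n k (fun i => X i ω) * (Nat.factorial k : ℝ) := by ring
    · rw [Set.indicator_of_notMem hω]
      exact hsymnonneg ω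
  have hindint : Integrable (({ω | q ≤ ∑ i, X i ω}).indicator (fun _ => genChoose q k)) ℙ :=
    (integrable_const _).indicator hEmeas
  have hMark := integral_mono hindint hsymint hpoint
  rw [integral_indicator_const _ hEmeas, smul_eq_mul] at hMark
  constructor
  · rw [le_div_iff₀ hCpos]
    exact hMark
  -- second inequality
  · set p : Fin n → ℝ := fun i => ∫ ω, X i ω ∂ℙ with hp
    have hexp : ∫ ω, symS n k (fun i => X i ω) ∂ℙ = symS n k p := by
      simp only [symS]
      rw [integral_finset_sum _ fun T _ => hprodint T]
      exact Finset.sum_congr rfl fun T _ => integral_finset_prod_of_indep hXmeas hindep T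
    have hpnonneg : ∀ i, 0 ≤ p i :=
      fun i => integral_nonneg fun ω => (hXrange i ω).1
    have hμsum : ∑ i, p i = μ := by
      rw [hμ, integral_finset_sum _ fun i _ => hXint i]
    have hub : (Nat.factorial k : ℝ) * symS n k p ≤ μ^k := by
      have := symS_upper n p hpnonneg k
      rwa [hμsum] at this
    have hA : 0 < ∏ i ∈ Finset.range k, (q - i) :=
      Finset.prod_pos fun i hi => by linarith [hik i hi]
    have hstep : (∫ ω, symS n k (fun i => X i ω) ∂ℙ) / genChoose q k
        = ((Nat.factorial k : ℝ) * symS n k p) / ∏ i ∈ Finset.range k, (q - i) := by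
      rw [hexp, genChoose, div_div_eq_mul_div, div_eq_div_iff hA.ne' hA.ne']
      ring
    rw [hstep]
    have hfin : μ^k / ∏ i ∈ Finset.range k, (q - i) ≤ chernoffG μ δ := by
      have := ratio_le_G μ δ hμpos hδ k hk
      rw [← hq] at this
      exact this
    refine le_trans ?_ hfin
    exact (div_le_div_iff_of_pos_right hA).mpr hub
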